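/- Let d be a positive odd integer, k̃ = ⌊(d+2)/4⌋, and define d_j = (∏_{1≤ℓ≤k̃} (d + 2 - 2ℓ - 2j)) / (∏_{1≤ℓ≤k̃, ℓ≠j} (2ℓ - 2j)) for 1 ≤ j ≤ k̃. Then for every integer m with 1 ≤ m ≤ k̃, one has ∑_{j=1}^{k̃} d_j / (d + 2 - 2m - 2j) = 1. -/
import Mathlib

open Finset Polynomial

lemma basis_coeff_top {F : Type*} [Field F] {ι : Type*} [DecidableEq ι]
    (s : Finset ι) (v : ι → F) {i : ι} (hi : i ∈ s) :
    (Lagrange.basis s v i).coeff (#s - 1) = Lagrange.nodalWeight s v i := by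
  rw [Lagrange.basis_eq_prod_sub_inv_mul_nodal_div hi, ← Lagrange.nodal_erase_eq_nodal_div hi,
    coeff_C_mul]
  have h1 : (Lagrange.nodal (s.erase i) v).natDegree = #s - 1 := by
    rw [Lagrange.natDegree_nodal, card_erase_of_mem hi]
  rw [← h1, Lagrange.nodal_monic.coeff_natDegree, mul_one]

lemma divided_diff_eq_top_coeff {F : Type*} [Field F] {ι : Type*} [DecidableEq ι]
    (s : Finset ι) (v : ι → F) (hvs : Set.InjOn v s) (P : F[X]) (hP : P.degree < #s) :
    ∑ i ∈ s, P.eval (v i) * Lagrange.nodalWeight s v i = P.coeff (#s - 1) := by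
  conv_rhs => rw [Lagrange.eq_interpolate hvs hP]
  rw [Lagrange.interpolate_apply, finset_sum_coeff]
  refine Finset.sum_congr rfl fun i hi => ?_
  rw [coeff_C_mul, basis_coeff_top s v hi]

/-- For `d` a positive odd integer, `k̃ = ⌊(d+2)/4⌋`, and the coefficients
`D j = (∏_{1≤ℓ≤k̃} (d + 2 - 2ℓ - 2j)) / (∏_{1≤ℓ≤k̃, ℓ≠j} (2ℓ - 2j))`, one has
`∑_{j=1}^{k̃} D j / (d + 2 - 2m - 2j) = 1` for every `1 ≤ m ≤ k̃`. -/
theorem di_identity_one (d : ℕ) (hd : Odd d) (hd0 : 0 < d)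
    (D : ℕ → ℝ)
    (hD : ∀ j, D j =
      (∏ ℓ ∈ Finset.Icc 1 ((d + 2) / 4), ((d : ℝ) + 2 - 2 * (ℓ : ℝ) - 2 * (j : ℝ))) /
        ∏ ℓ ∈ (Finset.Icc 1 ((d + 2) / 4)).erase j, (2 * (ℓ : ℝ) - 2 * (j : ℝ)))
    (m : ℕ) (hm1 : 1 ≤ m) (hm2 : m ≤ (d + 2) / 4) :
    ∑ j ∈ Finset.Icc 1 ((d + 2) / 4),
        D j / ((d : ℝ) + 2 - 2 * (m : ℝ) - 2 * (j : ℝ)) = 1 := by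
  obtain ⟨t, ht⟩ := hd
  set k := (d + 2) / 4 with hk
  set s : Finset ℕ := Finset.Icc 1 k with hs
  have hm : m ∈ s := Finset.mem_Icc.mpr ⟨hm1, hm2⟩
  set v : ℕ → ℝ := fun j => -(2 * (j : ℝ)) with hv
  have hvs : Set.InjOn v s := by
    intro a _ b _ hab
    have : (a : ℝ) = b := by
      simpa [hv, neg_inj, mul_right_cancel₀ (two_ne_zero (α := ℝ))] using hab
    exact_mod_cast this
  set P : ℝ[X] := ∏ ℓ ∈ s.erase m, (X + C ((d : ℝ) + 2 - 2 * (ℓ : ℝ))) with hP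
  have hPmonic : P.Monic := monic_prod_of_monic _ _ fun ℓ _ => monic_X_add_C _
  have hPdeg : P.natDegree = #s - 1 := by
    rw [hP, natDegree_prod _ _ fun ℓ _ => (monic_X_add_C _).ne_zero,
      Finset.sum_congr rfl fun ℓ _ => natDegree_X_add_C _, Finset.sum_const, smul_eq_mul,
      mul_one, card_erase_of_mem hm]
  have hcard : #s = k := by simp [hs]
  have hk1 : 1 ≤ k := le_trans hm1 hm2
  have hdeglt : P.degree < (#s : WithBot ℕ) := by
    rw [degree_eq_natDegree hPmonic.ne_zero, hPdeg]
    exact_mod_cast Nat.sub_lt (by omega) one_pos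
  have key := divided_diff_eq_top_coeff s v hvs P hdeglt
  rw [← hPdeg, hPmonic.coeff_natDegree] at key
  rw [← key]
  refine Finset.sum_congr rfl fun j hj => ?_
  have hfm : (d : ℝ) + 2 - 2 * (m : ℝ) - 2 * (j : ℝ) ≠ 0 := by
    have : ((2 * (t : ℤ) + 3 - 2 * m - 2 * j : ℤ) : ℝ)
        = (d : ℝ) + 2 - 2 * (m : ℝ) - 2 * (j : ℝ) := by push_cast [ht]; ring
    rw [← this]
    exact_mod_cast (by omega : 2 * (t : ℤ) + 3 - 2 * m - 2 * j ≠ 0)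
  rw [hD j,
    ← Finset.mul_prod_erase s (fun ℓ => (d : ℝ) + 2 - 2 * (ℓ : ℝ) - 2 * (j : ℝ)) hm]
  rw [div_div, mul_comm (∏ ℓ ∈ s.erase j, (2 * (ℓ : ℝ) - 2 * (j : ℝ)))
      ((d : ℝ) + 2 - 2 * (m : ℝ) - 2 * (j : ℝ)),
    mul_div_mul_left _ _ hfm]
  have hevalP : P.eval (v j) = ∏ ℓ ∈ s.erase m, ((d : ℝ) + 2 - 2 * (ℓ : ℝ) - 2 * (j : ℝ)) := by
    rw [hP, eval_prod]
    exact Finset.prod_congr rfl fun ℓ _ => by simp [hv]; ring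
  have hw : Lagrange.nodalWeight s v j
      = (∏ ℓ ∈ s.erase j, (2 * (ℓ : ℝ) - 2 * (j : ℝ)))⁻¹ := by
    rw [Lagrange.nodalWeight, ← Finset.prod_inv_distrib]
    exact Finset.prod_congr rfl fun ℓ _ => by rw [hv]; ring_nf
  rw [hevalP, hw, div_eq_mul_inv]
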